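/- Let X ⊆ ℂ^n have tangent cone at infinity equal to the linear subspace L = {(x,y) : y = 0}, and let π be the orthogonal projection onto L. If γ : (ε, ∞) → X is a curve with ‖γ(t)‖ → +∞ and π(γ(t)) = tv + o(t) for some v ∈ L, then γ(t) = t(v,0) + o(t). -/

import Mathlib

open Set Filter Metric

/-- `E` is a tangent cone of `X` at infinity: for some sequence `t_j → ∞`, the rescaled
sphere slices `(1/t_j)(X ∩ {‖x‖ = t_j})` converge in the Hausdorff sense to a subset `D`
of the unit sphere, and `E` is the cone over `D`. -/
def IsTangentConeAtInfinity {V : Type*} [NormedAddCommGroup V] [NormedSpace ℝ V]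
    (X E : Set V) : Prop :=
  ∃ (t : ℕ → ℝ) (D : Set V),
    (∀ j, 0 < t j) ∧ Tendsto t atTop atTop ∧ D ⊆ Metric.sphere (0 : V) 1 ∧
    Tendsto (fun j => EMetric.hausdorffEdist
        ((fun x => (t j)⁻¹ • x) '' (X ∩ Metric.sphere (0 : V) (t j))) D) atTop (nhds 0) ∧
    E = {x | ∃ s : ℝ, 0 ≤ s ∧ ∃ v ∈ D, x = s • v}

/-- In coordinates `ℂⁿ = ℂᵈ × ℂᵉ`, the first (`x`) component of `z`. -/
def xPart {d e : ℕ} (z : EuclideanSpace ℂ (Fin (d + e))) : EuclideanSpace ℂ (Fin d) :=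
  WithLp.toLp 2 (fun i => z (Fin.castAdd e i))

/-- In coordinates `ℂⁿ = ℂᵈ × ℂᵉ`, the second (`y`) component of `z`. -/
def yPart {d e : ℕ} (z : EuclideanSpace ℂ (Fin (d + e))) : EuclideanSpace ℂ (Fin e) :=
  WithLp.toLp 2 (fun i => z (Fin.natAdd d i))

/-- Suppose the tangent cone at infinity of `X ⊆ ℂⁿ` is `L = {(x,y) : y = 0}` (in
coordinates `ℂⁿ = ℂᵈ × ℂᵉ`) and `π` is the orthogonal projection onto `L`. If
`γ : (ε, ∞) → X` satisfies `‖γ(t)‖ → ∞` and `π(γ(t)) = t v + o(t)`, then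
`γ(t) = t (v, 0) + o(t)`, i.e. the `y`-part of `γ(t)` is `o(t)`. -/
lemma yPart_sub {d e : ℕ} (a b : EuclideanSpace ℂ (Fin (d + e))) :
    yPart (a - b) = yPart a - yPart b := by ext i; simp [yPart]

lemma yPart_smul {d e : ℕ} (r : ℝ) (a : EuclideanSpace ℂ (Fin (d + e))) :
    yPart (r • a) = r • yPart a := by ext i; simp [yPart]

lemma sq_norm_split {d e : ℕ} (z : EuclideanSpace ℂ (Fin (d + e))) :
    ‖z‖ ^ 2 = ‖xPart z‖ ^ 2 + ‖yPart z‖ ^ 2 := by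
  have h1 : ‖z‖ ^ 2 = ∑ i, ‖z i‖ ^ 2 := by
    rw [EuclideanSpace.norm_eq, Real.sq_sqrt (by positivity)]
  have h2 : ‖xPart z‖ ^ 2 = ∑ i, ‖xPart z i‖ ^ 2 := by
    rw [EuclideanSpace.norm_eq, Real.sq_sqrt (by positivity)]
  have h3 : ‖yPart z‖ ^ 2 = ∑ i, ‖yPart z i‖ ^ 2 := by
    rw [EuclideanSpace.norm_eq, Real.sq_sqrt (by positivity)]
  rw [h1, h2, h3, Fin.sum_univ_add (fun i => ‖z i‖ ^ 2)]
  simp [xPart, yPart]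

lemma norm_yPart_le {d e : ℕ} (z : EuclideanSpace ℂ (Fin (d + e))) : ‖yPart z‖ ≤ ‖z‖ := by
  have := sq_norm_split z
  nlinarith [norm_nonneg z, norm_nonneg (yPart z), norm_nonneg (xPart z)]

lemma norm_le_parts {d e : ℕ} (z : EuclideanSpace ℂ (Fin (d + e))) :
    ‖z‖ ≤ ‖xPart z‖ + ‖yPart z‖ := by
  have := sq_norm_split z
  nlinarith [norm_nonneg z, norm_nonneg (yPart z), norm_nonneg (xPart z)]

theorem lifting_tangent_at_infinity (d e : ℕ)
    (X : Set (EuclideanSpace ℂ (Fin (d + e))))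
    (L : Set (EuclideanSpace ℂ (Fin (d + e))))
    (hL : L = {z | yPart z = 0})
    (hcone : IsTangentConeAtInfinity X L)
    (huniq : ∀ E, IsTangentConeAtInfinity X E → E = L)
    (ε : ℝ) (γ : ℝ → EuclideanSpace ℂ (Fin (d + e)))
    (hγX : ∀ t ∈ Set.Ioi ε, γ t ∈ X)
    (hγtop : Tendsto (fun t => ‖γ t‖) atTop atTop)
    (v : EuclideanSpace ℂ (Fin d))
    (hx : Tendsto (fun t : ℝ => (t : ℝ)⁻¹ • (xPart (γ t) - t • v)) atTop (nhds 0)) :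
    Tendsto (fun t : ℝ => (t : ℝ)⁻¹ • yPart (γ t)) atTop (nhds 0) := by
  classical
  by_contra hcon
  rw [Metric.tendsto_nhds] at hcon
  push_neg at hcon
  obtain ⟨ε₀, hε₀, hfreq⟩ := hcon
  simp only [not_eventually, not_lt, dist_zero_right] at hfreq
  -- bundle eventual facts
  have hev : ∀ᶠ t : ℝ in atTop,
      ε < t ∧ 1 ≤ t ∧ 1 ≤ ‖γ t‖ ∧ ‖(t : ℝ)⁻¹ • (xPart (γ t) - t • v)‖ ≤ 1 := by
    have h1 := eventually_gt_atTop ε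
    have h2 := eventually_ge_atTop (1 : ℝ)
    have h3 := hγtop.eventually_ge_atTop 1
    have h4 : ∀ᶠ t : ℝ in atTop, ‖(t : ℝ)⁻¹ • (xPart (γ t) - t • v)‖ ≤ 1 := by
      have := Metric.tendsto_nhds.mp hx 1 one_pos
      filter_upwards [this] with t ht
      rw [dist_zero_right] at ht; exact ht.le
    filter_upwards [h1, h2, h3, h4] with t a b c dd using ⟨a, b, c, dd⟩
  have hfreq2 := hfreq.and_eventually hev
  rw [Filter.frequently_atTop] at hfreq2
  choose T hTge hTP using fun k : ℕ => hfreq2 (k : ℝ)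
  have hT : Tendsto T atTop atTop :=
    tendsto_atTop_mono hTge tendsto_natCast_atTop_atTop
  -- facts along T
  have hTpos : ∀ k, (0:ℝ) < T k := fun k => lt_of_lt_of_le one_pos (hTP k).2.2.1
  set s : ℕ → ℝ := fun k => ‖γ (T k)‖ with hs_def
  have hs1 : ∀ k, (1:ℝ) ≤ s k := fun k => (hTP k).2.2.2.1
  have hspos : ∀ k, (0:ℝ) < s k := fun k => lt_of_lt_of_le one_pos (hs1 k)
  have hstop : Tendsto s atTop atTop := hγtop.comp hT
  set p : ℕ → EuclideanSpace ℂ (Fin (d + e)) := fun k => (s k)⁻¹ • γ (T k) with hp_def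
  set A : ℕ → Set (EuclideanSpace ℂ (Fin (d + e))) :=
    fun k => (fun x => (s k)⁻¹ • x) '' (X ∩ Metric.sphere (0 : EuclideanSpace ℂ (Fin (d + e))) (s k)) with hA_def
  have hpA : ∀ k, p k ∈ A k := by
    intro k
    exact ⟨γ (T k), ⟨hγX _ (hTP k).2.1, by simp [hs_def]⟩, rfl⟩
  have hAS : ∀ k, A k ⊆ Metric.sphere (0 : EuclideanSpace ℂ (Fin (d + e))) 1 := by
    rintro k x ⟨z, ⟨_, hz⟩, rfl⟩
    rw [mem_sphere_zero_iff_norm] at hz ⊢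
    rw [norm_smul, hz, norm_inv, Real.norm_of_nonneg (hspos k).le,
      inv_mul_cancel₀ (hspos k).ne']
  -- compactness of the sphere
  set S : Set (EuclideanSpace ℂ (Fin (d + e))) := Metric.sphere (0 : EuclideanSpace ℂ (Fin (d + e))) 1 with hS_def
  haveI : CompactSpace ↥S := isCompact_iff_compactSpace.mp (isCompact_sphere 0 1)
  set B : ℕ → Set ↥S := fun k => Subtype.val ⁻¹' A k with hB_def
  have hvalB : ∀ k, Subtype.val '' B k = A k := by
    intro k
    rw [Subtype.image_preimage_coe]
    exact inter_eq_right.mpr (hAS k)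
  set K : ℕ → TopologicalSpace.NonemptyCompacts ↥S := fun k =>
    ⟨⟨closure (B k), isClosed_closure.isCompact⟩,
      ⟨⟨p k, hAS k (hpA k)⟩, subset_closure (by exact hpA k)⟩⟩ with hK_def
  obtain ⟨Kinf, φ, hφmono, hφconv⟩ := CompactSpace.tendsto_subseq K
  set D : Set (EuclideanSpace ℂ (Fin (d + e))) := Subtype.val '' (Kinf : Set ↥S) with hD_def
  have hDS : D ⊆ S := by rintro x ⟨w, _, rfl⟩; exact w.2
  -- closure of A equals image of K
  have hclA : ∀ k, Subtype.val '' (K k : Set ↥S) = closure (A k) := by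
    intro k
    apply Subset.antisymm
    · calc Subtype.val '' closure (B k)
          ⊆ closure (Subtype.val '' B k) :=
            image_closure_subset_closure_image continuous_subtype_val
        _ = closure (A k) := by rw [hvalB k]
    · apply closure_minimal
      · rw [← hvalB k]; exact image_mono subset_closure
      · exact (isClosed_closure.isCompact.image continuous_subtype_val).isClosed
  -- Hausdorff edist of A (φ j) to D tends to 0
  have hEdist : Tendsto (fun j => EMetric.hausdorffEdist (A (φ j)) D) atTop (nhds 0) := by
    have heq : ∀ j, EMetric.hausdorffEdist (A (φ j)) D = edist (K (φ j)) Kinf := by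
      intro j
      have h1 : EMetric.hausdorffEdist (A (φ j)) D
          = EMetric.hausdorffEdist (closure (A (φ j))) D :=
        (EMetric.hausdorffEdist_closure₁).symm
      rw [h1, ← hclA (φ j), hD_def]; unfold EMetric.hausdorffEdist; rw [
        EMetric.hausdorffEdist_image isometry_subtype_coe]
      rfl
    simp only [heq]
    have : Tendsto (fun j => edist (K (φ j)) Kinf) atTop (nhds (edist Kinf Kinf)) :=
      (hφconv.edist tendsto_const_nhds)
    simpa using this
  -- build a tangent cone from D
  have hconeD : IsTangentConeAtInfinity X {x | ∃ r : ℝ, 0 ≤ r ∧ ∃ w ∈ D, x = r • w} :=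
    ⟨fun j => s (φ j), D, fun j => hspos _, hstop.comp hφmono.tendsto_atTop,
      hDS, hEdist, rfl⟩
  have hDL : D ⊆ L := by
    intro w hw
    rw [← huniq _ hconeD]
    exact ⟨1, zero_le_one, w, hw, (one_smul _ _).symm⟩
  have hDy : ∀ w ∈ D, yPart w = 0 := by
    intro w hw; have := hDL hw; rwa [hL] at this
  have hDne : D.Nonempty := Kinf.nonempty.image _
  -- key norm bound
  have hkey : ∀ j, ENNReal.ofReal ‖yPart (p (φ j))‖
      ≤ EMetric.hausdorffEdist (A (φ j)) D := by
    intro j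
    refine le_trans ?_ (EMetric.infEdist_le_hausdorffEdist_of_mem (hpA (φ j)))
    rw [EMetric.le_infEdist]
    intro w hw
    rw [edist_dist]
    apply ENNReal.ofReal_le_ofReal
    have : yPart (p (φ j)) = yPart (p (φ j) - w) := by
      rw [yPart_sub, hDy w hw, sub_zero]
    rw [this, dist_eq_norm]
    exact norm_yPart_le _
  have hy0 : Tendsto (fun j => ‖yPart (p (φ j))‖) atTop (nhds 0) := by
    have h1 : Tendsto (fun j => ENNReal.ofReal ‖yPart (p (φ j))‖) atTop (nhds 0) := by
      apply tendsto_of_tendsto_of_tendsto_of_le_of_le tendsto_const_nhds hEdist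
        (fun j => zero_le) hkey
    have h2 := (ENNReal.tendsto_toReal (by simp)).comp h1
    have h3 : (ENNReal.toReal ∘ fun j => ENNReal.ofReal ‖yPart (p (φ j))‖)
        = fun j => ‖yPart (p (φ j))‖ :=
      funext fun j => ENNReal.toReal_ofReal (norm_nonneg _)
    rwa [h3] at h2
  -- rewrite in terms of s and y norms
  have hyp : ∀ k, ‖yPart (p k)‖ = (s k)⁻¹ * ‖yPart (γ (T k))‖ := by
    intro k
    rw [hp_def]
    simp only [yPart_smul, norm_smul, norm_inv, Real.norm_of_nonneg (hspos k).le]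
  -- get contradiction
  set C : ℝ := ‖v‖ + 1 with hC_def
  have hC1 : (1:ℝ) ≤ C := by simp [hC_def, norm_nonneg]
  have hyev : ∀ᶠ j in atTop, (s (φ j))⁻¹ * ‖yPart (γ (T (φ j)))‖ ≤ min (1/2) (ε₀/(4*C)) := by
    have hmin : (0:ℝ) < min (1/2) (ε₀/(4*C)) := by
      apply lt_min (by norm_num)
      positivity
    filter_upwards [hy0.eventually_le_const hmin] with j hj
    rw [← hyp]; exact hj
  obtain ⟨j, hj⟩ := hyev.exists
  set k := φ j
  set t := T k
  set u := ‖yPart (γ t)‖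
  set a := ‖xPart (γ t)‖
  have ht1 : (1:ℝ) ≤ t := (hTP k).2.2.1
  have htpos : (0:ℝ) < t := lt_of_lt_of_le one_pos ht1
  have hεt : ε₀ ≤ t⁻¹ * u := by
    have := (hTP k).1
    rwa [norm_smul, norm_inv, Real.norm_of_nonneg htpos.le] at this
  have hu1 : ε₀ * t ≤ u := by
    have := mul_le_mul_of_nonneg_right hεt htpos.le
    rwa [mul_comm t⁻¹ u, mul_assoc, inv_mul_cancel₀ htpos.ne', mul_one] at this
  have hxa : a ≤ C * t := by
    have hxb := (hTP k).2.2.2.2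
    rw [norm_smul, norm_inv, Real.norm_of_nonneg htpos.le] at hxb
    have h5 : ‖xPart (γ t) - t • v‖ ≤ t := by
      have := mul_le_mul_of_nonneg_left hxb htpos.le
      rwa [← mul_assoc, mul_inv_cancel₀ htpos.ne', one_mul, mul_one] at this
    calc a ≤ ‖xPart (γ t) - t • v‖ + ‖t • v‖ := by
            have : xPart (γ t) = (xPart (γ t) - t • v) + t • v := by abel
            calc a = ‖(xPart (γ t) - t • v) + t • v‖ := by rw [← this]
              _ ≤ _ := norm_add_le _ _
      _ ≤ t + t * ‖v‖ := by
            rw [norm_smul, Real.norm_of_nonneg htpos.le]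
            exact add_le_add_left h5 _
      _ = C * t := by rw [hC_def]; ring
  have hsk : s k ≤ a + u := norm_le_parts _
  have hu2 : u ≤ s k * (1/2) := by
    have := le_trans hj (min_le_left _ _)
    have h := mul_le_mul_of_nonneg_left this (hspos k).le
    rwa [← mul_assoc, mul_inv_cancel₀ (hspos k).ne', one_mul] at h
  have hu3 : u ≤ s k * (ε₀/(4*C)) := by
    have := le_trans hj (min_le_right _ _)
    have h := mul_le_mul_of_nonneg_left this (hspos k).le
    rwa [← mul_assoc, mul_inv_cancel₀ (hspos k).ne', one_mul] at h
  have hs2Ct : s k ≤ 2 * C * t := by nlinarith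
  have : ε₀ * t ≤ ε₀ * t / 2 := by
    calc ε₀ * t ≤ u := hu1
      _ ≤ s k * (ε₀/(4*C)) := hu3
      _ ≤ (2 * C * t) * (ε₀/(4*C)) := by
          apply mul_le_mul_of_nonneg_right hs2Ct
          positivity
      _ = ε₀ * t / 2 := by field_simp; ring
  nlinarith
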